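/- arXiv:2312.07881 — 2 statements merged into one kernel-verified Lean document; each statement's English description precedes it below -/
import Mathlib

section
/- Let ψ : [0,1] → ℝ^r and σ² : [0,1] → ℝ be continuous with σ²(s) ≥ a > 0, set f_t = ψ(t/T) and σ_t² = σ²(t/T), and let |α| < 1. With L_{ts} = α^{t-s-1} for t>s (0 otherwise), F = (f₁,...,f_T)', D = diag(σ_t²), one has (1/T)·F'L'D⁻¹F → (1/(1-α))·∫₀¹ ψ(s)ψ(s)'/σ²(s) ds as T → ∞. -/
open Matrix Filter Finset MeasureTheory Topology

lemma riemann_right (φ : ℝ → ℝ) (hφ : ContinuousOn φ (Set.Icc 0 1)) :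
    Tendsto (fun T : ℕ => (1 / (T:ℝ)) * ∑ s ∈ Finset.range T, φ (((s:ℝ) + 1) / T))
      atTop (𝓝 (∫ x in (0:ℝ)..1, φ x)) := by
  have huc := Metric.uniformContinuousOn_iff.mp
    (isCompact_Icc.uniformContinuousOn_of_continuous hφ)
  rw [Metric.tendsto_atTop]
  intro ε hε
  obtain ⟨δ, hδ, hd⟩ := huc (ε/2) (by positivity)
  obtain ⟨N, hN⟩ := exists_nat_one_div_lt hδ
  refine ⟨N + 1, fun T hT => ?_⟩
  have hT1 : 1 ≤ T := le_trans (Nat.le_add_left 1 N) hT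
  have hTpos : (0:ℝ) < T := by exact_mod_cast hT1
  have hmem : ∀ s : ℕ, s ≤ T → (s:ℝ)/T ∈ Set.Icc (0:ℝ) 1 := by
    intro s hs
    constructor
    · positivity
    · rw [div_le_one hTpos]; exact_mod_cast hs
  set a : ℕ → ℝ := fun i => (i:ℝ)/T with ha
  have hsub : ∀ k : ℕ, k < T → Set.uIcc (a k) (a (k+1)) ⊆ Set.Icc (0:ℝ) 1 := by
    intro k hk
    have hle : a k ≤ a (k+1) := by
      apply div_le_div_of_nonneg_right _ hTpos.le
      push_cast; linarith
    rw [Set.uIcc_of_le hle]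
    intro x hx
    have h1 := hmem k hk.le
    have h2 := hmem (k+1) hk
    exact ⟨le_trans h1.1 hx.1, le_trans hx.2 h2.2⟩
  have hint : ∀ k < T, IntervalIntegrable φ volume (a k) (a (k+1)) := fun k hk =>
    (hφ.mono (hsub k hk)).intervalIntegrable
  have hsplit : ∫ x in (0:ℝ)..1, φ x = ∑ s ∈ Finset.range T, ∫ x in a s..a (s+1), φ x := by
    rw [intervalIntegral.sum_integral_adjacent_intervals hint]
    simp [ha, div_self hTpos.ne']
  have hstep : ∀ s : ℕ, a (s+1) - a s = 1 / T := by
    intro s; simp only [ha]; push_cast; ring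
  rw [Real.dist_eq, hsplit, Finset.mul_sum, ← Finset.sum_sub_distrib]
  have hbound : ∀ s ∈ Finset.range T,
      |1/(T:ℝ) * φ (((s:ℝ)+1)/T) - ∫ x in a s..a (s+1), φ x| ≤ ε/2 * (1/T) := by
    intro s hs
    rw [Finset.mem_range] at hs
    have hc : (1:ℝ)/T * φ (((s:ℝ)+1)/T) = ∫ _ in a s..a (s+1), φ (((s:ℝ)+1)/T) := by
      rw [intervalIntegral.integral_const, hstep, smul_eq_mul, mul_comm]
    rw [hc, ← intervalIntegral.integral_sub (intervalIntegrable_const) (hint s hs)]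
    have := intervalIntegral.norm_integral_le_of_norm_le_const (C := ε/2)
      (f := fun x => φ (((s:ℝ)+1)/T) - φ x) (a := a s) (b := a (s+1)) ?_
    · rw [Real.norm_eq_abs] at this
      refine le_trans this ?_
      rw [hstep]
      rw [abs_of_nonneg (by positivity)]
    · intro x hx
      have hxm : x ∈ Set.Icc (0:ℝ) 1 := hsub s hs (Set.uIoc_subset_uIcc hx)
      have hsm : ((s:ℝ)+1)/T ∈ Set.Icc (0:ℝ) 1 := by
        have := hmem (s+1) hs; push_cast at this ⊢; exact this
      rw [Real.norm_eq_abs]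
      refine le_of_lt (hd _ hsm _ hxm ?_)
      rw [Real.dist_eq]
      have hxIoc : x ∈ Set.Ioc (a s) (a (s+1)) := by
        rwa [Set.uIoc_of_le (by rw [← sub_nonneg, hstep]; positivity)] at hx
      have h1 : a (s+1) = ((s:ℝ)+1)/T := by simp only [ha]; push_cast; ring
      rw [abs_of_nonneg (by rw [← h1]; linarith [hxIoc.2])]
      have : a s < x := hxIoc.1
      have h0 : a s = (s:ℝ)/T := rfl
      have : ((s:ℝ)+1)/T - x < 1/T := by
        rw [h0] at this
        have : (s:ℝ)/T < x := this
        have hh : ((s:ℝ)+1)/T - (s:ℝ)/T = 1/T := by ring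
        linarith
      calc ((s:ℝ)+1)/T - x < 1/T := this
        _ ≤ 1/((N:ℝ)+1) := by
            apply one_div_le_one_div_of_le (by positivity)
            exact_mod_cast hT
        _ < δ := hN
  calc |∑ s ∈ Finset.range T, (1/(T:ℝ) * φ (((s:ℝ)+1)/T) - ∫ x in a s..a (s+1), φ x)|
      ≤ ∑ s ∈ Finset.range T, |1/(T:ℝ) * φ (((s:ℝ)+1)/T) - ∫ x in a s..a (s+1), φ x| :=
        Finset.abs_sum_le_sum_abs _ _
    _ ≤ ∑ _s ∈ Finset.range T, ε/2 * (1/T) := Finset.sum_le_sum hbound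
    _ = ε/2 * (T * (1/T)) := by rw [Finset.sum_const, card_range]; ring
    _ < ε := by rw [mul_one_div, div_self hTpos.ne']; linarith

lemma shifted_riemann (g h : ℝ → ℝ) (hg : ContinuousOn g (Set.Icc 0 1))
    (hh : ContinuousOn h (Set.Icc 0 1)) (k : ℕ) :
    Tendsto (fun T : ℕ => (1/(T:ℝ)) *
        ∑ s ∈ Finset.Ico (k+1) T, g (((s:ℝ) - k)/T) * h (((s:ℝ)+1)/T))
      atTop (𝓝 (∫ x in (0:ℝ)..1, g x * h x)) := by
  have hB := riemann_right (fun x => g x * h x) (hg.mul hh)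
  obtain ⟨Mg, hMg⟩ := isCompact_Icc.exists_bound_of_continuousOn hg
  obtain ⟨Mh, hMh⟩ := isCompact_Icc.exists_bound_of_continuousOn hh
  set M := max Mg (max Mh 1) with hM
  have hM1 : (1:ℝ) ≤ M := le_max_of_le_right (le_max_right _ _)
  have hM0 : (0:ℝ) < M := lt_of_lt_of_le one_pos hM1
  have hgb : ∀ x ∈ Set.Icc (0:ℝ) 1, |g x| ≤ M := fun x hx =>
    le_trans (hMg x hx) (le_max_left _ _)
  have hhb : ∀ x ∈ Set.Icc (0:ℝ) 1, |h x| ≤ M := fun x hx =>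
    le_trans (hMh x hx) (le_max_of_le_right (le_max_left _ _))
  have huc := Metric.uniformContinuousOn_iff.mp
    (isCompact_Icc.uniformContinuousOn_of_continuous hg)
  rw [Metric.tendsto_atTop] at hB ⊢
  intro ε hε
  obtain ⟨N₁, hN₁⟩ := hB (ε/2) (by positivity)
  obtain ⟨δ, hδ, hd⟩ := huc (ε/(4*M)) (by positivity)
  obtain ⟨N₂, hN₂⟩ := exists_nat_gt (max (((k:ℝ)+1)/δ) (4*((k:ℝ)+1)*M*M/ε))
  refine ⟨max N₁ (max N₂ (k+1)), fun T hT => ?_⟩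
  have hTN₁ : N₁ ≤ T := le_trans (le_max_left _ _) hT
  have hTN₂ : (N₂:ℝ) ≤ T := by
    exact_mod_cast le_trans (le_trans (le_max_left _ _) (le_max_right _ _)) hT
  have hTk : k + 1 ≤ T := le_trans (le_trans (le_max_right _ _) (le_max_right _ _)) hT
  have hTpos : (0:ℝ) < T := by
    have : 1 ≤ T := le_trans (Nat.le_add_left 1 k) hTk
    exact_mod_cast this
  have hd1 : ((k:ℝ)+1)/δ < T := lt_of_lt_of_le (lt_of_le_of_lt (le_max_left _ _) hN₂) hTN₂
  have hd2 : 4*((k:ℝ)+1)*M*M/ε < T :=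
    lt_of_lt_of_le (lt_of_le_of_lt (le_max_right _ _) hN₂) hTN₂
  have hkT : ((k:ℝ)+1)/T < δ := by
    have h' := (div_lt_iff₀ hδ).mp hd1
    rw [div_lt_iff₀ hTpos]
    linarith [mul_comm δ (T:ℝ)]
  -- membership
  have hmem : ∀ s : ℕ, s ≤ T → (s:ℝ)/T ∈ Set.Icc (0:ℝ) 1 := by
    intro s hs
    refine ⟨by positivity, ?_⟩
    rw [div_le_one hTpos]; exact_mod_cast hs
  have key : |(1/(T:ℝ)) * ∑ s ∈ Finset.Ico (k+1) T, g (((s:ℝ) - k)/T) * h (((s:ℝ)+1)/T)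
      - (1/(T:ℝ)) * ∑ s ∈ Finset.range T, g (((s:ℝ)+1)/T) * h (((s:ℝ)+1)/T)| ≤ ε/2 := by
    have hsplit : ∑ s ∈ Finset.range T, g (((s:ℝ)+1)/T) * h (((s:ℝ)+1)/T)
        = (∑ s ∈ Finset.Ico 0 (k+1), g (((s:ℝ)+1)/T) * h (((s:ℝ)+1)/T))
          + ∑ s ∈ Finset.Ico (k+1) T, g (((s:ℝ)+1)/T) * h (((s:ℝ)+1)/T) := by
      rw [Finset.range_eq_Ico, ← Finset.sum_Ico_consecutive _ (Nat.zero_le (k+1)) hTk]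
    rw [hsplit]
    have e1 : (1/(T:ℝ)) * ∑ s ∈ Finset.Ico (k+1) T, g (((s:ℝ) - k)/T) * h (((s:ℝ)+1)/T)
        - (1/(T:ℝ)) * ((∑ s ∈ Finset.Ico 0 (k+1), g (((s:ℝ)+1)/T) * h (((s:ℝ)+1)/T))
          + ∑ s ∈ Finset.Ico (k+1) T, g (((s:ℝ)+1)/T) * h (((s:ℝ)+1)/T))
        = (1/(T:ℝ)) * ∑ s ∈ Finset.Ico (k+1) T,
            (g (((s:ℝ) - k)/T) - g (((s:ℝ)+1)/T)) * h (((s:ℝ)+1)/T)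
          - (1/(T:ℝ)) * ∑ s ∈ Finset.Ico 0 (k+1), g (((s:ℝ)+1)/T) * h (((s:ℝ)+1)/T) := by
      simp only [sub_mul, Finset.sum_sub_distrib]
      ring
    rw [e1]
    have b1 : |(1/(T:ℝ)) * ∑ s ∈ Finset.Ico (k+1) T,
        (g (((s:ℝ) - k)/T) - g (((s:ℝ)+1)/T)) * h (((s:ℝ)+1)/T)| ≤ ε/4 := by
      rw [abs_mul]
      have hterm : ∀ s ∈ Finset.Ico (k+1) T,
          |(g (((s:ℝ) - k)/T) - g (((s:ℝ)+1)/T)) * h (((s:ℝ)+1)/T)| ≤ ε/(4*M) * M := by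
        intro s hs
        rw [Finset.mem_Ico] at hs
        have hs1 : (k:ℝ) + 1 ≤ (s:ℝ) := by exact_mod_cast hs.1
        have hs2 : (s:ℝ) + 1 ≤ (T:ℝ) := by exact_mod_cast hs.2
        have hx1 : ((s:ℝ) - k)/T ∈ Set.Icc (0:ℝ) 1 := by
          refine ⟨div_nonneg (by linarith) hTpos.le, ?_⟩
          rw [div_le_one hTpos]; linarith
        have hx2 : ((s:ℝ)+1)/T ∈ Set.Icc (0:ℝ) 1 := by
          refine ⟨by positivity, ?_⟩
          rw [div_le_one hTpos]; linarith
        rw [abs_mul]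
        have h1 : |g (((s:ℝ) - k)/T) - g (((s:ℝ)+1)/T)| ≤ ε/(4*M) := by
          refine le_of_lt (hd _ hx1 _ hx2 ?_)
          rw [Real.dist_eq]
          have : ((s:ℝ) - k)/T - ((s:ℝ)+1)/T = -(((k:ℝ)+1)/T) := by ring
          rw [this, abs_neg, abs_of_nonneg (by positivity)]
          exact hkT
        exact mul_le_mul h1 (hhb _ hx2) (abs_nonneg _) (by positivity)
      calc |1/(T:ℝ)| * |∑ s ∈ Finset.Ico (k+1) T,
          (g (((s:ℝ) - k)/T) - g (((s:ℝ)+1)/T)) * h (((s:ℝ)+1)/T)|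
          ≤ (1/T) * ∑ s ∈ Finset.Ico (k+1) T, ε/(4*M) * M := by
            rw [abs_of_nonneg (by positivity)]
            apply mul_le_mul_of_nonneg_left _ (by positivity)
            exact le_trans (Finset.abs_sum_le_sum_abs _ _) (Finset.sum_le_sum hterm)
        _ = (1/T) * ((T - (k+1) : ℕ) * (ε/(4*M) * M)) := by
            rw [Finset.sum_const, Nat.card_Ico, nsmul_eq_mul]
        _ ≤ ε/4 := by
            have hMM : ε/(4*M)*M = ε/4 := by field_simp
            rw [hMM]
            have hc : ((T - (k+1) : ℕ):ℝ) ≤ T := by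
              have : T - (k+1) ≤ T := Nat.sub_le _ _
              exact_mod_cast this
            calc (1/(T:ℝ)) * ((T - (k+1) : ℕ) * (ε/4))
                ≤ (1/(T:ℝ)) * (T * (ε/4)) := by
                  apply mul_le_mul_of_nonneg_left _ (by positivity)
                  apply mul_le_mul_of_nonneg_right hc (by positivity)
              _ = ε/4 := by field_simp
    have b2 : |(1/(T:ℝ)) * ∑ s ∈ Finset.Ico 0 (k+1), g (((s:ℝ)+1)/T) * h (((s:ℝ)+1)/T)| ≤ ε/4 := by
      rw [abs_mul]
      have hterm : ∀ s ∈ Finset.Ico 0 (k+1), |g (((s:ℝ)+1)/T) * h (((s:ℝ)+1)/T)| ≤ M * M := by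
        intro s hs
        rw [Finset.mem_Ico] at hs
        have hs2 : (s:ℝ) + 1 ≤ (T:ℝ) := by
          have : s + 1 ≤ T := le_trans (by omega) hTk
          exact_mod_cast this
        have hx2 : ((s:ℝ)+1)/T ∈ Set.Icc (0:ℝ) 1 := by
          refine ⟨by positivity, ?_⟩
          rw [div_le_one hTpos]; linarith
        rw [abs_mul]
        exact mul_le_mul (hgb _ hx2) (hhb _ hx2) (abs_nonneg _) hM0.le
      calc |1/(T:ℝ)| * |∑ s ∈ Finset.Ico 0 (k+1), g (((s:ℝ)+1)/T) * h (((s:ℝ)+1)/T)|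
          ≤ (1/T) * (((k:ℝ)+1) * (M*M)) := by
            rw [abs_of_nonneg (by positivity)]
            apply mul_le_mul_of_nonneg_left _ (by positivity)
            refine le_trans (Finset.abs_sum_le_sum_abs _ _)
              (le_trans (Finset.sum_le_sum hterm) ?_)
            rw [Finset.sum_const, Nat.card_Ico, nsmul_eq_mul]
            push_cast; simp
        _ ≤ ε/4 := by
            have h' := (div_lt_iff₀ hε).mp hd2
            have h'' : ((k:ℝ)+1)*(M*M) ≤ (T:ℝ) * (ε/4) := by nlinarith
            calc (1/(T:ℝ)) * (((k:ℝ)+1)*(M*M)) ≤ (1/(T:ℝ)) * ((T:ℝ) * (ε/4)) :=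
                mul_le_mul_of_nonneg_left h'' (by positivity)
              _ = ε/4 := by field_simp
    calc |(1/(T:ℝ)) * ∑ s ∈ Finset.Ico (k+1) T,
            (g (((s:ℝ) - k)/T) - g (((s:ℝ)+1)/T)) * h (((s:ℝ)+1)/T)
          - (1/(T:ℝ)) * ∑ s ∈ Finset.Ico 0 (k+1), g (((s:ℝ)+1)/T) * h (((s:ℝ)+1)/T)|
        ≤ |(1/(T:ℝ)) * ∑ s ∈ Finset.Ico (k+1) T,
            (g (((s:ℝ) - k)/T) - g (((s:ℝ)+1)/T)) * h (((s:ℝ)+1)/T)|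
          + |(1/(T:ℝ)) * ∑ s ∈ Finset.Ico 0 (k+1), g (((s:ℝ)+1)/T) * h (((s:ℝ)+1)/T)| :=
          abs_sub _ _
      _ ≤ ε/4 + ε/4 := add_le_add b1 b2
      _ = ε/2 := by ring
  have hB' := hN₁ T hTN₁
  rw [Real.dist_eq] at hB' ⊢
  calc |(1/(T:ℝ)) * ∑ s ∈ Finset.Ico (k+1) T, g (((s:ℝ) - k)/T) * h (((s:ℝ)+1)/T)
        - ∫ x in (0:ℝ)..1, g x * h x|
      ≤ |(1/(T:ℝ)) * ∑ s ∈ Finset.Ico (k+1) T, g (((s:ℝ) - k)/T) * h (((s:ℝ)+1)/T)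
          - (1/(T:ℝ)) * ∑ s ∈ Finset.range T, g (((s:ℝ)+1)/T) * h (((s:ℝ)+1)/T)|
        + |(1/(T:ℝ)) * ∑ s ∈ Finset.range T, g (((s:ℝ)+1)/T) * h (((s:ℝ)+1)/T)
          - ∫ x in (0:ℝ)..1, g x * h x| := abs_sub_le _ _ _
    _ ≤ ε/2 + |(1/(T:ℝ)) * ∑ s ∈ Finset.range T, g (((s:ℝ)+1)/T) * h (((s:ℝ)+1)/T)
          - ∫ x in (0:ℝ)..1, g x * h x| := add_le_add_left key _
    _ < ε/2 + ε/2 := by exact add_lt_add_right hB' _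
    _ = ε := by ring

lemma core_limit (α : ℝ) (hα : |α| < 1) (g h : ℝ → ℝ) (hg : ContinuousOn g (Set.Icc 0 1))
    (hh : ContinuousOn h (Set.Icc 0 1)) :
    Tendsto (fun T : ℕ => (1/(T:ℝ)) * ∑ s ∈ Finset.range T,
        (∑ t ∈ Finset.range s, α ^ (s - t - 1) * g (((t:ℝ)+1)/T)) * h (((s:ℝ)+1)/T))
      atTop (𝓝 ((1/(1-α)) * ∫ x in (0:ℝ)..1, g x * h x)) := by
  obtain ⟨Mg, hMg⟩ := isCompact_Icc.exists_bound_of_continuousOn hg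
  obtain ⟨Mh, hMh⟩ := isCompact_Icc.exists_bound_of_continuousOn hh
  set M := max Mg (max Mh 1) with hM
  have hM1 : (1:ℝ) ≤ M := le_max_of_le_right (le_max_right _ _)
  have hM0 : (0:ℝ) < M := lt_of_lt_of_le one_pos hM1
  have hgb : ∀ x ∈ Set.Icc (0:ℝ) 1, |g x| ≤ M := fun x hx =>
    le_trans (hMg x hx) (le_max_left _ _)
  have hhb : ∀ x ∈ Set.Icc (0:ℝ) 1, |h x| ≤ M := fun x hx =>
    le_trans (hMh x hx) (le_max_of_le_right (le_max_left _ _))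
  set D : ℕ → ℕ → ℝ := fun T k =>
    (1/(T:ℝ)) * ∑ s ∈ Finset.Ico (k+1) T, g (((s:ℝ) - k)/T) * h (((s:ℝ)+1)/T) with hD
  set f : ℕ → ℕ → ℝ := fun T k => if k < T then α ^ k * D T k else 0 with hf
  -- rewrite expression as tsum
  have hrw : ∀ T : ℕ, (1/(T:ℝ)) * ∑ s ∈ Finset.range T,
      (∑ t ∈ Finset.range s, α ^ (s - t - 1) * g (((t:ℝ)+1)/T)) * h (((s:ℝ)+1)/T)
      = ∑' k, f T k := by
    intro T
    have h1 : ∀ s : ℕ, s < T → (∑ t ∈ Finset.range s, α ^ (s - t - 1) * g (((t:ℝ)+1)/T))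
        = ∑ k ∈ Finset.range s, α ^ k * g (((s:ℝ) - k)/T) := by
      intro s _
      rw [← Finset.sum_range_reflect]
      apply Finset.sum_congr rfl
      intro j hj
      rw [Finset.mem_range] at hj
      congr 2
      · omega
      · have : ((s - 1 - j : ℕ) : ℝ) = (s:ℝ) - 1 - j := by
          have h1 : ((s - 1 - j : ℕ) : ℝ) = ((s:ℕ):ℝ) - ((1 + j : ℕ):ℝ) := by
            rw [← Nat.cast_sub (by omega)]
            congr 1
            omega
          push_cast at h1 ⊢
          linarith
        rw [this]
        ring
    have h2 : ∑ s ∈ Finset.range T,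
        (∑ t ∈ Finset.range s, α ^ (s - t - 1) * g (((t:ℝ)+1)/T)) * h (((s:ℝ)+1)/T)
        = ∑ s ∈ Finset.range T, ∑ k ∈ Finset.range s,
            α ^ k * (g (((s:ℝ) - k)/T) * h (((s:ℝ)+1)/T)) := by
      apply Finset.sum_congr rfl
      intro s hs
      rw [Finset.mem_range] at hs
      rw [h1 s hs, Finset.sum_mul]
      apply Finset.sum_congr rfl
      intro k _
      ring
    have h3 : ∑ s ∈ Finset.range T, ∑ k ∈ Finset.range s,
          α ^ k * (g (((s:ℝ) - k)/T) * h (((s:ℝ)+1)/T))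
        = ∑ k ∈ Finset.range T, ∑ s ∈ Finset.Ico (k+1) T,
            α ^ k * (g (((s:ℝ) - k)/T) * h (((s:ℝ)+1)/T)) := by
      simp only [Finset.range_eq_Ico]
      exact (Finset.sum_Ico_Ico_comm' 0 T
        (fun k s => α ^ k * (g (((s:ℝ) - k)/T) * h (((s:ℝ)+1)/T)))).symm
    rw [h2, h3, Finset.mul_sum]
    rw [tsum_eq_sum (s := Finset.range T) (by
      intro k hk
      rw [Finset.mem_range] at hk
      simp only [hf]
      rw [if_neg hk])]
    apply Finset.sum_congr rfl
    intro k hk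
    rw [Finset.mem_range] at hk
    simp only [hf, hD]
    rw [if_pos hk, Finset.mul_sum, Finset.mul_sum]
    rw [Finset.mul_sum]
    apply Finset.sum_congr rfl
    intro s _
    ring
  have hconv : Tendsto (fun T => ∑' k, f T k) atTop
      (𝓝 (∑' k, α ^ k * ∫ x in (0:ℝ)..1, g x * h x)) := by
    apply tendsto_tsum_of_dominated_convergence
      (bound := fun k => |α| ^ k * (M * M))
    · exact (summable_geometric_of_lt_one (abs_nonneg _) hα).mul_right _
    · intro k
      have hsh := (shifted_riemann g h hg hh k).const_mul (α ^ k)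
      apply hsh.congr'
      filter_upwards [eventually_ge_atTop (k+1)] with T hT
      simp only [hf, hD]
      rw [if_pos (by omega)]
    · filter_upwards with T
      intro k
      simp only [hf]
      by_cases hk : k < T
      · rw [if_pos hk]
        have hT1 : 1 ≤ T := by omega
        have hTpos : (0:ℝ) < T := by exact_mod_cast hT1
        rw [Real.norm_eq_abs, abs_mul, abs_pow]
        apply mul_le_mul_of_nonneg_left _ (by positivity)
        simp only [hD]
        rw [abs_mul]
        have hbound : ∀ s ∈ Finset.Ico (k+1) T,
            |g (((s:ℝ) - k)/T) * h (((s:ℝ)+1)/T)| ≤ M * M := by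
          intro s hs
          rw [Finset.mem_Ico] at hs
          have hs1 : (k:ℝ) + 1 ≤ (s:ℝ) := by exact_mod_cast hs.1
          have hs2 : (s:ℝ) + 1 ≤ (T:ℝ) := by exact_mod_cast hs.2
          have hx1 : ((s:ℝ) - k)/T ∈ Set.Icc (0:ℝ) 1 := by
            refine ⟨div_nonneg (by linarith) hTpos.le, ?_⟩
            rw [div_le_one hTpos]; linarith
          have hx2 : ((s:ℝ)+1)/T ∈ Set.Icc (0:ℝ) 1 := by
            refine ⟨by positivity, ?_⟩
            rw [div_le_one hTpos]; linarith
          rw [abs_mul]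
          exact mul_le_mul (hgb _ hx1) (hhb _ hx2) (abs_nonneg _) hM0.le
        calc |1/(T:ℝ)| * |∑ s ∈ Finset.Ico (k+1) T, g (((s:ℝ) - k)/T) * h (((s:ℝ)+1)/T)|
            ≤ (1/T) * ((T - (k+1) : ℕ) * (M * M)) := by
              rw [abs_of_nonneg (by positivity)]
              apply mul_le_mul_of_nonneg_left _ (by positivity)
              refine le_trans (Finset.abs_sum_le_sum_abs _ _)
                (le_trans (Finset.sum_le_sum hbound) ?_)
              rw [Finset.sum_const, Nat.card_Ico, nsmul_eq_mul]
          _ ≤ M * M := by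
              have hc : ((T - (k+1) : ℕ):ℝ) ≤ T := by
                exact_mod_cast Nat.sub_le T (k+1)
              calc (1/(T:ℝ)) * ((T - (k+1) : ℕ) * (M * M))
                  ≤ (1/(T:ℝ)) * (T * (M * M)) := by
                    apply mul_le_mul_of_nonneg_left _ (by positivity)
                    exact mul_le_mul_of_nonneg_right hc (by positivity)
                _ = M * M := by field_simp
      · rw [if_neg hk]
        simp only [norm_zero]
        positivity
  have hsum : (∑' k : ℕ, α ^ k * ∫ x in (0:ℝ)..1, g x * h x)
      = (1/(1-α)) * ∫ x in (0:ℝ)..1, g x * h x := by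
    rw [tsum_mul_right, tsum_geometric_of_norm_lt_one (by rwa [Real.norm_eq_abs]), one_div]
  rw [← hsum]
  exact hconv.congr (fun T => (hrw T).symm)

/-- Riemann-sum limit: with `f_t = ψ(t/T)`, `σ_t² = σ²(t/T)` for continuous `ψ`, `σ²`
with `σ² ≥ a > 0`, `|α| < 1`, and `L` the matrix with entries `α^(t-s-1)` for `t > s`,
`(1/T) F' L' D⁻¹ F → (1/(1-α)) ∫₀¹ ψ(s)ψ(s)'/σ²(s) ds`. -/
theorem stmt_9 (r : ℕ) (α a : ℝ) (hα : |α| < 1) (ha : 0 < a)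
    (ψ : ℝ → Fin r → ℝ) (σsq : ℝ → ℝ)
    (hψ : ContinuousOn ψ (Set.Icc 0 1)) (hσcont : ContinuousOn σsq (Set.Icc 0 1))
    (hσ : ∀ s ∈ Set.Icc (0:ℝ) 1, a ≤ σsq s)
    (L : (T : ℕ) → Matrix (Fin T) (Fin T) ℝ)
    (hL : ∀ (T : ℕ) (t s : Fin T), L T t s =
      if (s : ℕ) < (t : ℕ) then α ^ ((t : ℕ) - (s : ℕ) - 1) else 0)
    (F : (T : ℕ) → Matrix (Fin T) (Fin r) ℝ)
    (hF : ∀ (T : ℕ) (t : Fin T) (j : Fin r), F T t j = ψ (((t : ℕ) + 1) / T) j)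
    (D : (T : ℕ) → Matrix (Fin T) (Fin T) ℝ)
    (hD : ∀ T : ℕ, D T = Matrix.diagonal (fun t : Fin T => σsq (((t : ℕ) + 1) / T))) :
    Tendsto (fun T : ℕ => (1 / (T : ℝ)) • ((F T)ᵀ * (L T)ᵀ * (D T)⁻¹ * F T))
      atTop (nhds ((1 / (1 - α)) •
        Matrix.of fun i j : Fin r => ∫ s in (0:ℝ)..1, ψ s i * ψ s j / σsq s)) := by
  have hmem : ∀ (T : ℕ) (s : ℕ), s < T → ((s:ℝ) + 1) / T ∈ Set.Icc (0:ℝ) 1 := by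
    intro T s hs
    have hTpos : (0:ℝ) < T := by
      have : 1 ≤ T := by omega
      exact_mod_cast this
    refine ⟨by positivity, ?_⟩
    rw [div_le_one hTpos]
    have : s + 1 ≤ T := hs
    exact_mod_cast this
  have hσne : ∀ (T : ℕ) (s : ℕ), s < T → σsq (((s:ℝ) + 1) / T) ≠ 0 := fun T s hs =>
    ne_of_gt (lt_of_lt_of_le ha (hσ _ (hmem T s hs)))
  -- entry formula
  have hentry : ∀ (T : ℕ) (i j : Fin r), ((F T)ᵀ * (L T)ᵀ * (D T)⁻¹ * F T) i j
      = ∑ s ∈ Finset.range T, (∑ t ∈ Finset.range s, α ^ (s - t - 1) * ψ (((t:ℝ)+1)/T) i) *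
          (ψ (((s:ℝ)+1)/T) j / σsq (((s:ℝ)+1)/T)) := by
    intro T i j
    have hDi : (D T)⁻¹ = Matrix.diagonal (fun t : Fin T => (σsq ((((t:ℕ):ℝ) + 1) / T))⁻¹) := by
      rw [hD]
      apply Matrix.inv_eq_right_inv
      rw [Matrix.diagonal_mul_diagonal]
      have heq : (fun i : Fin T => σsq ((((i:ℕ):ℝ)+1)/T) * (σsq ((((i:ℕ):ℝ)+1)/T))⁻¹)
          = fun _ => 1 := by
        funext t
        exact mul_inv_cancel₀ (hσne T t t.isLt)
      rw [heq, Matrix.diagonal_one]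
    have hterm : ∀ s : Fin T, ((F T)ᵀ * (L T)ᵀ * Matrix.diagonal
          (fun t : Fin T => (σsq ((((t:ℕ):ℝ) + 1) / T))⁻¹)) i s
        = (∑ t ∈ Finset.range (s:ℕ), α ^ ((s:ℕ) - t - 1) * ψ (((t:ℝ)+1)/T) i)
            * (σsq ((((s:ℕ):ℝ) + 1) / T))⁻¹ := by
      intro s
      rw [Matrix.mul_diagonal]
      congr 1
      rw [Matrix.mul_apply]
      have hsum1 : ∀ t : Fin T, (F T)ᵀ i t * (L T)ᵀ t s
          = (fun n : ℕ => ψ (((n:ℝ)+1)/T) i * (if n < (s:ℕ) then α ^ ((s:ℕ) - n - 1) else 0))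
              (t:ℕ) := by
        intro t
        rw [Matrix.transpose_apply, Matrix.transpose_apply, hF, hL]
      have hfil : (Finset.range T).filter (fun n => n < (s:ℕ)) = Finset.range (s:ℕ) := by
        ext n
        simp only [Finset.mem_filter, Finset.mem_range]
        have := s.isLt
        omega
      calc (∑ t : Fin T, (F T)ᵀ i t * (L T)ᵀ t s)
          = ∑ t : Fin T, (fun n : ℕ => ψ (((n:ℝ)+1)/T) i *
              (if n < (s:ℕ) then α ^ ((s:ℕ) - n - 1) else 0)) (t:ℕ) :=
            Finset.sum_congr rfl (fun t _ => hsum1 t)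
        _ = ∑ n ∈ Finset.range T, ψ (((n:ℝ)+1)/T) i *
              (if n < (s:ℕ) then α ^ ((s:ℕ) - n - 1) else 0) :=
            Fin.sum_univ_eq_sum_range (fun n : ℕ => ψ (((n:ℝ)+1)/T) i *
              (if n < (s:ℕ) then α ^ ((s:ℕ) - n - 1) else 0)) T
        _ = ∑ n ∈ Finset.range (s:ℕ), α ^ ((s:ℕ) - n - 1) * ψ (((n:ℝ)+1)/T) i := by
            simp only [mul_ite, mul_zero]
            rw [← Finset.sum_filter, hfil]
            exact Finset.sum_congr rfl (fun n _ => mul_comm _ _)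
    calc ((F T)ᵀ * (L T)ᵀ * (D T)⁻¹ * F T) i j
        = ∑ s : Fin T, ((F T)ᵀ * (L T)ᵀ * Matrix.diagonal
            (fun t : Fin T => (σsq ((((t:ℕ):ℝ) + 1) / T))⁻¹)) i s * F T s j := by
          rw [hDi, Matrix.mul_apply]
      _ = ∑ s : Fin T, (fun n : ℕ => (∑ t ∈ Finset.range n, α ^ (n - t - 1) * ψ (((t:ℝ)+1)/T) i) *
            (ψ (((n:ℝ)+1)/T) j / σsq (((n:ℝ)+1)/T))) (s:ℕ) := by
          apply Finset.sum_congr rfl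
          intro s _
          rw [hterm s, hF]
          simp only []
          rw [div_eq_mul_inv]
          ring
      _ = ∑ s ∈ Finset.range T, (∑ t ∈ Finset.range s, α ^ (s - t - 1) * ψ (((t:ℝ)+1)/T) i) *
            (ψ (((s:ℝ)+1)/T) j / σsq (((s:ℝ)+1)/T)) :=
          Fin.sum_univ_eq_sum_range (fun n : ℕ => (∑ t ∈ Finset.range n,
            α ^ (n - t - 1) * ψ (((t:ℝ)+1)/T) i) *
            (ψ (((n:ℝ)+1)/T) j / σsq (((n:ℝ)+1)/T))) T
  -- reduce to entries
  apply tendsto_pi_nhds.mpr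
  intro i
  rw [tendsto_pi_nhds]
  intro j
  have hg : ContinuousOn (fun x => ψ x i) (Set.Icc 0 1) :=
    (continuous_apply i).comp_continuousOn hψ
  have hh : ContinuousOn (fun x => ψ x j / σsq x) (Set.Icc 0 1) :=
    ((continuous_apply j).comp_continuousOn hψ).div hσcont
      (fun x hx => ne_of_gt (lt_of_lt_of_le ha (hσ x hx)))
  have hcore := core_limit α hα (fun x => ψ x i) (fun x => ψ x j / σsq x) hg hh
  have hint : (∫ x in (0:ℝ)..1, ψ x i * (ψ x j / σsq x))
      = ∫ x in (0:ℝ)..1, ψ x i * ψ x j / σsq x := by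
    congr 1
    funext x
    rw [mul_div_assoc]
  simp only [Matrix.smul_apply, Matrix.of_apply, smul_eq_mul]
  rw [← hint]
  apply hcore.congr
  intro T
  rw [hentry T i j]
end

section
/- Under the same assumptions (ψ, σ² continuous on [0,1], σ² ≥ a > 0, f_t = ψ(t/T), σ_t² = σ²(t/T), |α| < 1), one has (1/T)·F'L'D⁻¹LF → (1/(1-α)²)·∫₀¹ ψ(s)ψ(s)'/σ²(s) ds as T → ∞. -/
open Matrix Filter

open Finset in
lemma riemann {h : ℝ → ℝ} (hh : ContinuousOn h (Set.Icc 0 1)) :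
    Tendsto (fun T : ℕ => (T:ℝ)⁻¹ * ∑ t ∈ Finset.range T, h ((t+1)/T)) atTop
      (nhds (∫ s in (0:ℝ)..1, h s)) := by
  have hcmp := isCompact_Icc.uniformContinuousOn_of_continuous hh
  rw [Metric.tendsto_atTop]
  intro ε hε
  obtain ⟨δ, hδ, hmod⟩ := Metric.uniformContinuousOn_iff.mp hcmp (ε/2) (by linarith)
  obtain ⟨N, hN⟩ := exists_nat_gt (1/δ)
  refine ⟨N + 1, fun T hT => ?_⟩
  have hT1 : 1 ≤ T := le_trans (Nat.le_add_left 1 N) hT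
  have hT0 : (0:ℝ) < T := by exact_mod_cast Nat.lt_of_lt_of_le Nat.zero_lt_one hT1
  have hTN : 1/δ < (T:ℝ) := lt_of_lt_of_le hN (by exact_mod_cast le_trans (Nat.le_succ N) hT)
  have hTδ : 1/(T:ℝ) < δ := by
    rw [div_lt_iff₀ hT0]
    have := (div_lt_iff₀ hδ).mp hTN
    linarith [mul_comm δ (T:ℝ)]
  -- membership facts
  have hmem : ∀ t : ℕ, t < T → ∀ x ∈ Set.Icc ((t:ℝ)/T) (((t:ℝ)+1)/T), x ∈ Set.Icc (0:ℝ) 1 := by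
    intro t ht x hx
    constructor
    · exact le_trans (by positivity) hx.1
    · refine le_trans hx.2 ?_
      rw [div_le_one hT0]
      exact_mod_cast ht
  -- integrability on pieces
  have hint : ∀ t : ℕ, t < T → IntervalIntegrable h MeasureTheory.volume ((t:ℝ)/T) (((t:ℝ)+1)/T) := by
    intro t ht
    refine (hh.mono (fun x hx => hmem t ht x ?_)).intervalIntegrable
    rwa [Set.uIcc_of_le (by gcongr <;> linarith)] at hx
  have hadj : ∑ t ∈ Finset.range T, (∫ s in ((t:ℝ)/T)..(((t:ℝ)+1)/T), h s)
      = ∫ s in (0:ℝ)..1, h s := by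
    have := intervalIntegral.sum_integral_adjacent_intervals
      (a := fun k : ℕ => (k:ℝ)/T) (n := T) (f := h) (μ := MeasureTheory.volume)
      (by intro k hk; push_cast; exact hint k hk)
    simp only [Nat.cast_zero, zero_div] at this
    rw [div_self (ne_of_gt hT0)] at this
    rw [← this]
    apply Finset.sum_congr rfl
    intro t _
    push_cast
    rfl
  have hconst : ∀ t : ℕ, (T:ℝ)⁻¹ * h (((t:ℝ)+1)/T)
      = ∫ _ in ((t:ℝ)/T)..(((t:ℝ)+1)/T), h (((t:ℝ)+1)/T) := by
    intro t
    rw [intervalIntegral.integral_const, smul_eq_mul]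
    congr 1
    field_simp; ring
  have key : dist ((T:ℝ)⁻¹ * ∑ t ∈ Finset.range T, h (((t:ℝ)+1)/T)) (∫ s in (0:ℝ)..1, h s) ≤ ε/2 := by
    rw [Real.dist_eq, ← hadj, Finset.mul_sum, ← Finset.sum_sub_distrib]
    refine le_trans (Finset.abs_sum_le_sum_abs _ _) ?_
    have hbd : ∀ t ∈ Finset.range T,
        |(T:ℝ)⁻¹ * h (((t:ℝ)+1)/T) - ∫ s in ((t:ℝ)/T)..(((t:ℝ)+1)/T), h s| ≤ (ε/2) * (1/T) := by
      intro t htm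
      have ht := Finset.mem_range.mp htm
      rw [hconst t, ← intervalIntegral.integral_sub (by apply intervalIntegrable_const) (hint t ht)]
      have := intervalIntegral.norm_integral_le_of_norm_le_const
        (a := (t:ℝ)/T) (b := ((t:ℝ)+1)/T) (C := ε/2)
        (f := fun s => h (((t:ℝ)+1)/T) - h s) ?_
      · refine le_trans this ?_
        rw [show ((t:ℝ)+1)/T - (t:ℝ)/T = 1/T by field_simp; ring]
        rw [abs_of_nonneg (by positivity)]
      · intro x hx
        rw [Set.uIoc_of_le (by gcongr <;> linarith)] at hx
        have hxI : x ∈ Set.Icc (0:ℝ) 1 := hmem t ht x ⟨le_of_lt hx.1, hx.2⟩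
        have hpI : ((t:ℝ)+1)/T ∈ Set.Icc (0:ℝ) 1 := hmem t ht _ ⟨by gcongr <;> linarith, le_refl _⟩
        have hd : dist (((t:ℝ)+1)/T) x < δ := by
          rw [Real.dist_eq, abs_of_nonneg (by linarith [hx.2])]
          have : (t:ℝ)/T < x := hx.1
          have h1T : ((t:ℝ)+1)/T - (t:ℝ)/T = 1/T := by field_simp; ring
          linarith
        have := hmod _ hpI _ hxI hd
        rw [Real.dist_eq] at this
        exact le_of_lt this
    refine le_trans (Finset.sum_le_sum hbd) ?_
    rw [Finset.sum_const, Finset.card_range, nsmul_eq_mul]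
    rw [mul_comm (ε/2) (1/(T:ℝ)), ← mul_assoc]
    rw [mul_one_div, div_self (ne_of_gt hT0), one_mul]
  calc dist ((T:ℝ)⁻¹ * ∑ t ∈ Finset.range T, h ((↑t+1)/T)) (∫ s in (0:ℝ)..1, h s) ≤ ε/2 := key
    _ < ε := by linarith

lemma geom_bd {β : ℝ} (h0 : 0 ≤ β) (h1 : β < 1) (n : ℕ) :
    ∑ k ∈ Finset.range n, β^k ≤ (1-β)⁻¹ := by
  have h1β : (0:ℝ) < 1 - β := by linarith
  rw [geom_sum_eq (by linarith : β ≠ 1), show (β^n - 1)/(β-1) = (1 - β^n)/(1-β) by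
    rw [← neg_div_neg_eq]; ring_nf]
  rw [div_le_iff₀ h1β, inv_mul_cancel₀ (ne_of_gt h1β)]
  have := pow_nonneg h0 n
  linarith

lemma tail_geom {β : ℝ} (h0 : 0 ≤ β) (h1 : β < 1) (K t : ℕ) :
    ∑ k ∈ Finset.range t, (if K ≤ k then β^k else 0) ≤ β^K * (1-β)⁻¹ := by
  have h1β : (0:ℝ) < 1 - β := by linarith
  rcases le_or_gt t K with h | h
  · rw [Finset.sum_eq_zero (fun k hk => by
      rw [if_neg (by simp only [Finset.mem_range] at hk; omega)])]
    positivity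
  · rw [Finset.range_eq_Ico, ← Finset.sum_Ico_consecutive _ (Nat.zero_le K) (le_of_lt h)]
    rw [Finset.sum_eq_zero (fun k hk => by rw [if_neg (by simp at hk; omega)]), zero_add]
    rw [Finset.sum_congr rfl (fun k hk => if_pos (Finset.mem_Ico.mp hk).1)]
    rw [Finset.sum_Ico_eq_sum_range]
    calc ∑ i ∈ Finset.range (t - K), β ^ (K + i) = β^K * ∑ i ∈ Finset.range (t-K), β^i := by
          rw [Finset.mul_sum]; exact Finset.sum_congr rfl fun i _ => pow_add β K i
      _ ≤ β^K * (1-β)⁻¹ := by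
          exact mul_le_mul_of_nonneg_left (geom_bd h0 h1 _) (pow_nonneg h0 K)

lemma avg_err {α : ℝ} (hα : |α| < 1) {u : ℝ → ℝ} (hu : ContinuousOn u (Set.Icc 0 1)) :
    Tendsto (fun T : ℕ => (T:ℝ)⁻¹ * ∑ t ∈ Finset.range T,
      |(∑ s ∈ Finset.range t, α^(t - s - 1) * u (((s:ℝ)+1)/T)) - u (((t:ℝ)+1)/T) / (1-α)|)
      atTop (nhds 0) := by
  set β := |α| with hβdef
  have hβ0 : 0 ≤ β := abs_nonneg α
  have hβ1 : β < 1 := hα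
  have h1β : (0:ℝ) < 1 - β := by linarith
  have h1α : (0:ℝ) < 1 - α := by
    have := le_abs_self α; linarith
  obtain ⟨M0, hM0⟩ := isCompact_Icc.exists_bound_of_continuousOn hu
  set M := max M0 1 with hMdef
  have hM : (0:ℝ) < M := lt_of_lt_of_le zero_lt_one (le_max_right _ _)
  have hMb : ∀ x ∈ Set.Icc (0:ℝ) 1, |u x| ≤ M :=
    fun x hx => le_trans (hM0 x hx) (le_max_left _ _)
  have hcmp := isCompact_Icc.uniformContinuousOn_of_continuous hu
  rw [Metric.tendsto_atTop]
  intro ε hε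
  have hε' : (0:ℝ) < ε/4 * (1-β) := by positivity
  obtain ⟨δ, hδ, hmod⟩ := Metric.uniformContinuousOn_iff.mp hcmp (ε/4 * (1-β)) hε'
  set Cq := 2*M*(1-β)⁻¹ with hCqdef
  have hCq : (0:ℝ) < Cq := by positivity
  obtain ⟨K, hK⟩ := ((tendsto_pow_atTop_nhds_zero_of_lt_one hβ0 hβ1).eventually_lt_const
    (by positivity : (0:ℝ) < ε/4/Cq)).exists
  have hKb : β^K * Cq < ε/4 := (lt_div_iff₀ hCq).mp hK
  obtain ⟨N₀, hN₀⟩ := exists_nat_gt ((K:ℝ)/δ)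
  obtain ⟨N₁, hN₁⟩ := exists_nat_gt ((M/(1-α))*(1-β)⁻¹/(ε/4))
  refine ⟨N₀ + N₁ + 1, fun T hT => ?_⟩
  have hT1 : 1 ≤ T := by omega
  have hT0 : (0:ℝ) < T := by exact_mod_cast Nat.lt_of_lt_of_le Nat.zero_lt_one hT1
  have hTN₀ : ((K:ℝ)/δ) < T := lt_of_lt_of_le hN₀ (by exact_mod_cast (by omega : N₀ ≤ T))
  have hTN₁ : (M/(1-α))*(1-β)⁻¹/(ε/4) < T :=
    lt_of_lt_of_le hN₁ (by exact_mod_cast (by omega : N₁ ≤ T))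
  have hmemT : ∀ n : ℕ, n ≤ T → ((n:ℝ)/T) ∈ Set.Icc (0:ℝ) 1 := by
    intro n hn
    constructor
    · positivity
    · rw [div_le_one hT0]; exact_mod_cast hn
  -- per-t bound
  have hEt : ∀ t ∈ Finset.range T,
      |(∑ s ∈ Finset.range t, α^(t - s - 1) * u (((s:ℝ)+1)/T)) - u (((t:ℝ)+1)/T) / (1-α)|
        ≤ ε/2 + β^t * (M/(1-α)) := by
    intro t htm
    have ht := Finset.mem_range.mp htm
    have hx₂ : (((t:ℝ)+1)/T) ∈ Set.Icc (0:ℝ) 1 := by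
      have := hmemT (t+1) (by omega); push_cast at this ⊢; exact this
    have hG : (∑ s ∈ Finset.range t, α^(t - s - 1) * u (((s:ℝ)+1)/T))
        = ∑ k ∈ Finset.range t, α^k * u (((t-k : ℕ):ℝ)/T) := by
      rw [← Finset.sum_range_reflect]
      refine Finset.sum_congr rfl (fun k hk => ?_)
      have hkt := Finset.mem_range.mp hk
      have h1 : t - (t - 1 - k) - 1 = k := by omega
      have h2 : ((t - 1 - k : ℕ):ℝ) + 1 = ((t - k : ℕ):ℝ) := by
        exact_mod_cast congrArg (Nat.cast : ℕ → ℝ) (by omega : (t - 1 - k) + 1 = t - k)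
      rw [h1, h2]
    have hid : u (((t:ℝ)+1)/T) / (1-α)
        = (∑ k ∈ Finset.range t, α^k * u (((t:ℝ)+1)/T)) + α^t * (u (((t:ℝ)+1)/T)/(1-α)) := by
      have hgs : ∑ k ∈ Finset.range t, (α:ℝ)^k = (1 - α^t)/(1-α) := by
        rw [geom_sum_eq (by intro h; rw [h] at h1α; simp at h1α : α ≠ 1)]
        rw [← neg_div_neg_eq]; ring_nf
      rw [← Finset.sum_mul, hgs]
      field_simp [ne_of_gt h1α]
      ring
    rw [hG, hid]
    have hsplit : (∑ k ∈ Finset.range t, α^k * u (((t-k : ℕ):ℝ)/T))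
        - ((∑ k ∈ Finset.range t, α^k * u (((t:ℝ)+1)/T)) + α^t * (u (((t:ℝ)+1)/T)/(1-α)))
        = (∑ k ∈ Finset.range t, α^k * (u (((t-k : ℕ):ℝ)/T) - u (((t:ℝ)+1)/T)))
          - α^t * (u (((t:ℝ)+1)/T)/(1-α)) := by
      rw [sub_add_eq_sub_sub, ← Finset.sum_sub_distrib]
      congr 1
      refine Finset.sum_congr rfl (fun k _ => by ring)
    rw [hsplit]
    refine le_trans (abs_sub _ _) ?_
    have hterm2 : |α^t * (u (((t:ℝ)+1)/T)/(1-α))| ≤ β^t * (M/(1-α)) := by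
      rw [abs_mul, abs_pow, abs_div, abs_of_pos h1α]
      exact mul_le_mul_of_nonneg_left
        (div_le_div_of_nonneg_right (hMb _ hx₂) (le_of_lt h1α)) (pow_nonneg hβ0 t)
    refine add_le_add ?_ hterm2
    refine le_trans (Finset.abs_sum_le_sum_abs _ _) ?_
    have hbd : ∀ k ∈ Finset.range t,
        |α^k * (u (((t-k : ℕ):ℝ)/T) - u (((t:ℝ)+1)/T))|
          ≤ (ε/4*(1-β)) * β^k + (if K ≤ k then β^k else 0) * (2*M) := by
      intro k hkm
      have hk := Finset.mem_range.mp hkm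
      have hx₁ : (((t-k:ℕ):ℝ)/T) ∈ Set.Icc (0:ℝ) 1 := hmemT (t-k) (by omega)
      rw [abs_mul, abs_pow]
      rcases lt_or_ge k K with hkK | hkK
      · rw [if_neg (by omega), zero_mul, add_zero, mul_comm]
        refine mul_le_mul_of_nonneg_right ?_ (pow_nonneg hβ0 k)
        have hdist : dist (((t-k:ℕ):ℝ)/T) (((t:ℝ)+1)/T) < δ := by
          rw [Real.dist_eq, Nat.cast_sub (le_of_lt hk), div_sub_div_same,
            show ((t:ℝ) - k) - ((t:ℝ)+1) = -((k:ℝ)+1) by ring, abs_div, abs_neg,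
            abs_of_nonneg (by positivity : (0:ℝ) ≤ (k:ℝ)+1), abs_of_pos hT0]
          have hnum : ((k:ℝ)+1) ≤ (K:ℝ) := by exact_mod_cast hkK
          have h2 : (K:ℝ)/T < δ := by
            rw [div_lt_iff₀ hT0]
            have := (div_lt_iff₀ hδ).mp hTN₀
            linarith [mul_comm δ (T:ℝ)]
          calc ((k:ℝ)+1)/T ≤ (K:ℝ)/T := by gcongr
            _ < δ := h2
        have := hmod _ hx₁ _ hx₂ hdist
        rw [Real.dist_eq] at this
        exact le_of_lt this
      · rw [if_pos hkK]
        have hd2M : |u (((t-k:ℕ):ℝ)/T) - u (((t:ℝ)+1)/T)| ≤ 2*M := by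
          calc |u (((t-k:ℕ):ℝ)/T) - u (((t:ℝ)+1)/T)|
              ≤ |u (((t-k:ℕ):ℝ)/T)| + |u (((t:ℝ)+1)/T)| := abs_sub _ _
            _ ≤ M + M := add_le_add (hMb _ hx₁) (hMb _ hx₂)
            _ = 2*M := by ring
        have h3 : β^k * |u (((t-k:ℕ):ℝ)/T) - u (((t:ℝ)+1)/T)| ≤ β^k * (2*M) :=
          mul_le_mul_of_nonneg_left hd2M (pow_nonneg hβ0 k)
        have h4 : (0:ℝ) ≤ (ε/4*(1-β)) * β^k := by positivity
        linarith
    refine le_trans (Finset.sum_le_sum hbd) ?_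
    rw [Finset.sum_add_distrib, ← Finset.mul_sum, ← Finset.sum_mul]
    have h1 : (ε/4*(1-β)) * ∑ k ∈ Finset.range t, β^k ≤ ε/4 := by
      calc (ε/4*(1-β)) * ∑ k ∈ Finset.range t, β^k
          ≤ (ε/4*(1-β)) * (1-β)⁻¹ :=
            mul_le_mul_of_nonneg_left (geom_bd hβ0 hβ1 t) (le_of_lt hε')
        _ = ε/4 := by field_simp
    have h2 : (∑ k ∈ Finset.range t, if K ≤ k then β^k else 0) * (2*M) ≤ β^K * Cq := by
      refine le_trans (mul_le_mul_of_nonneg_right (tail_geom hβ0 hβ1 K t) (by positivity)) ?_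
      rw [hCqdef]
      exact le_of_eq (by ring)
    linarith
  -- assemble
  have hS0 : (0:ℝ) ≤ (T:ℝ)⁻¹ * ∑ t ∈ Finset.range T,
      |(∑ s ∈ Finset.range t, α^(t - s - 1) * u (((s:ℝ)+1)/T)) - u (((t:ℝ)+1)/T) / (1-α)| :=
    mul_nonneg (inv_nonneg.mpr (le_of_lt hT0))
      (Finset.sum_nonneg fun _ _ => abs_nonneg _)
  rw [Real.dist_eq, sub_zero, abs_of_nonneg hS0]
  have hsum : (∑ t ∈ Finset.range T,
      |(∑ s ∈ Finset.range t, α^(t - s - 1) * u (((s:ℝ)+1)/T)) - u (((t:ℝ)+1)/T) / (1-α)|)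
      ≤ (T:ℝ)*(ε/2) + (1-β)⁻¹ * (M/(1-α)) := by
    refine le_trans (Finset.sum_le_sum hEt) ?_
    rw [Finset.sum_add_distrib, Finset.sum_const, Finset.card_range, nsmul_eq_mul,
      ← Finset.sum_mul]
    refine add_le_add_right (mul_le_mul_of_nonneg_right (geom_bd hβ0 hβ1 T) ?_) _
    positivity
  have hfin : (T:ℝ)⁻¹ * ((T:ℝ)*(ε/2) + (1-β)⁻¹ * (M/(1-α))) < ε := by
    rw [mul_add, ← mul_assoc, inv_mul_cancel₀ (ne_of_gt hT0), one_mul]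
    have h5 : (M/(1-α))*(1-β)⁻¹ < (ε/4) * T := by
      have := (div_lt_iff₀ (by positivity : (0:ℝ) < ε/4)).mp hTN₁
      linarith [mul_comm (T:ℝ) (ε/4)]
    have h6 : (T:ℝ)⁻¹ * ((1-β)⁻¹ * (M/(1-α))) < ε/4 := by
      rw [inv_mul_lt_iff₀ hT0]
      linarith [mul_comm ((1-β)⁻¹) (M/(1-α))]
    linarith
  calc (T:ℝ)⁻¹ * ∑ t ∈ Finset.range T,
        |(∑ s ∈ Finset.range t, α^(t - s - 1) * u (((s:ℝ)+1)/T)) - u (((t:ℝ)+1)/T) / (1-α)|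
      ≤ (T:ℝ)⁻¹ * ((T:ℝ)*(ε/2) + (1-β)⁻¹ * (M/(1-α))) :=
        mul_le_mul_of_nonneg_left hsum (inv_nonneg.mpr (le_of_lt hT0))
    _ < ε := hfin

lemma scalar_main {α a : ℝ} (hα : |α| < 1) (ha : 0 < a) {u v w : ℝ → ℝ}
    (hu : ContinuousOn u (Set.Icc 0 1)) (hv : ContinuousOn v (Set.Icc 0 1))
    (hw : ContinuousOn w (Set.Icc 0 1)) (hwa : ∀ s ∈ Set.Icc (0:ℝ) 1, a ≤ w s) :
    Tendsto (fun T : ℕ => (T:ℝ)⁻¹ * ∑ t ∈ Finset.range T,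
      (∑ s ∈ Finset.range t, α^(t-s-1) * u (((s:ℝ)+1)/T))
        * (∑ s ∈ Finset.range t, α^(t-s-1) * v (((s:ℝ)+1)/T)) / w (((t:ℝ)+1)/T))
      atTop (nhds ((1/(1-α)^2) * ∫ s in (0:ℝ)..1, u s * v s / w s)) := by
  set β := |α| with hβdef
  have hβ0 : 0 ≤ β := abs_nonneg α
  have hβ1 : β < 1 := hα
  have h1β : (0:ℝ) < 1 - β := by linarith
  have h1α : (0:ℝ) < 1 - α := by have := le_abs_self α; linarith
  have hwne : ∀ x ∈ Set.Icc (0:ℝ) 1, w x ≠ 0 :=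
    fun x hx => ne_of_gt (lt_of_lt_of_le ha (hwa x hx))
  -- the limit function
  set h₀ : ℝ → ℝ := fun s => (1/(1-α)^2) * (u s * v s / w s) with hh₀def
  have hh₀ : ContinuousOn h₀ (Set.Icc 0 1) :=
    continuousOn_const.mul (((hu.mul hv).div hw hwne))
  have hR := riemann hh₀
  have hint : (∫ s in (0:ℝ)..1, h₀ s) = (1/(1-α)^2) * ∫ s in (0:ℝ)..1, u s * v s / w s := by
    rw [hh₀def]
    exact intervalIntegral.integral_const_mul _ _
  rw [hint] at hR
  -- bounds on u, v
  obtain ⟨Mu0, hMu0⟩ := isCompact_Icc.exists_bound_of_continuousOn hu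
  obtain ⟨Mv0, hMv0⟩ := isCompact_Icc.exists_bound_of_continuousOn hv
  set Mu := max Mu0 1 with hMudef
  set Mv := max Mv0 1 with hMvdef
  have hMu : (0:ℝ) < Mu := lt_of_lt_of_le zero_lt_one (le_max_right _ _)
  have hMv : (0:ℝ) < Mv := lt_of_lt_of_le zero_lt_one (le_max_right _ _)
  have hMub : ∀ x ∈ Set.Icc (0:ℝ) 1, |u x| ≤ Mu :=
    fun x hx => le_trans (hMu0 x hx) (le_max_left _ _)
  have hMvb : ∀ x ∈ Set.Icc (0:ℝ) 1, |v x| ≤ Mv :=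
    fun x hx => le_trans (hMv0 x hx) (le_max_left _ _)
  -- error averages
  have hAu := avg_err hα hu
  have hAv := avg_err hα hv
  -- the squeeze
  have hdiff : Tendsto (fun T : ℕ =>
      ((T:ℝ)⁻¹ * ∑ t ∈ Finset.range T,
        (∑ s ∈ Finset.range t, α^(t-s-1) * u (((s:ℝ)+1)/T))
          * (∑ s ∈ Finset.range t, α^(t-s-1) * v (((s:ℝ)+1)/T)) / w (((t:ℝ)+1)/T))
        - (T:ℝ)⁻¹ * ∑ t ∈ Finset.range T, h₀ (((t:ℝ)+1)/T)) atTop (nhds 0) := by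
    have hg : Tendsto (fun T : ℕ =>
        (Mu * (1-β)⁻¹ / a) * ((T:ℝ)⁻¹ * ∑ t ∈ Finset.range T,
          |(∑ s ∈ Finset.range t, α^(t - s - 1) * v (((s:ℝ)+1)/T)) - v (((t:ℝ)+1)/T) / (1-α)|)
        + (Mv / (1-α) / a) * ((T:ℝ)⁻¹ * ∑ t ∈ Finset.range T,
          |(∑ s ∈ Finset.range t, α^(t - s - 1) * u (((s:ℝ)+1)/T)) - u (((t:ℝ)+1)/T) / (1-α)|))
        atTop (nhds 0) := by
      have := (hAv.const_mul (Mu * (1-β)⁻¹ / a)).add (hAu.const_mul (Mv / (1-α) / a))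
      simpa using this
    refine squeeze_zero_norm (fun T => ?_) hg
    -- case split on T = 0
    rcases Nat.eq_zero_or_pos T with hT | hTpos
    · subst hT; simp
    have hT0 : (0:ℝ) < T := by exact_mod_cast hTpos
    have hmemT : ∀ n : ℕ, n ≤ T → ((n:ℝ)/T) ∈ Set.Icc (0:ℝ) 1 := by
      intro n hn
      refine ⟨by positivity, ?_⟩
      rw [div_le_one hT0]; exact_mod_cast hn
    rw [Real.norm_eq_abs, ← mul_sub, ← Finset.sum_sub_distrib, abs_mul,
      abs_of_nonneg (inv_nonneg.mpr (le_of_lt hT0))]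
    have hptwise : ∀ t ∈ Finset.range T,
        |(∑ s ∈ Finset.range t, α^(t-s-1) * u (((s:ℝ)+1)/T))
            * (∑ s ∈ Finset.range t, α^(t-s-1) * v (((s:ℝ)+1)/T)) / w (((t:ℝ)+1)/T)
          - h₀ (((t:ℝ)+1)/T)|
        ≤ (Mu * (1-β)⁻¹ / a) *
            |(∑ s ∈ Finset.range t, α^(t - s - 1) * v (((s:ℝ)+1)/T)) - v (((t:ℝ)+1)/T) / (1-α)|
          + (Mv / (1-α) / a) *
            |(∑ s ∈ Finset.range t, α^(t - s - 1) * u (((s:ℝ)+1)/T)) - u (((t:ℝ)+1)/T) / (1-α)| := by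
      intro t htm
      have ht := Finset.mem_range.mp htm
      have hx₂ : (((t:ℝ)+1)/T) ∈ Set.Icc (0:ℝ) 1 := by
        have := hmemT (t+1) (by omega); push_cast at this ⊢; exact this
      have hwt : a ≤ w (((t:ℝ)+1)/T) := hwa _ hx₂
      have hwtpos : 0 < w (((t:ℝ)+1)/T) := lt_of_lt_of_le ha hwt
      set Gu := ∑ s ∈ Finset.range t, α^(t-s-1) * u (((s:ℝ)+1)/T) with hGudef
      set Gv := ∑ s ∈ Finset.range t, α^(t-s-1) * v (((s:ℝ)+1)/T) with hGvdef
      set ut := u (((t:ℝ)+1)/T) with hutdef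
      set vt := v (((t:ℝ)+1)/T) with hvtdef
      set wt := w (((t:ℝ)+1)/T) with hwtdef
      have hGuB : |Gu| ≤ Mu * (1-β)⁻¹ := by
        rw [hGudef]
        refine le_trans (Finset.abs_sum_le_sum_abs _ _) ?_
        have : ∀ s ∈ Finset.range t, |α^(t-s-1) * u (((s:ℝ)+1)/T)| ≤ β^(t-s-1) * Mu := by
          intro s hs
          rw [abs_mul, abs_pow]
          refine mul_le_mul_of_nonneg_left (hMub _ ?_) (pow_nonneg hβ0 _)
          have hsr := Finset.mem_range.mp hs
          have := hmemT (s+1) (by omega); push_cast at this ⊢; exact this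
        refine le_trans (Finset.sum_le_sum this) ?_
        rw [← Finset.sum_mul]
        refine mul_le_mul_of_nonneg_right ?_ (le_of_lt hMu)  |>.trans (le_of_eq (mul_comm _ _))
        calc (∑ s ∈ Finset.range t, β^(t-s-1)) = ∑ k ∈ Finset.range t, β^k := by
              rw [← Finset.sum_range_reflect]
              refine Finset.sum_congr rfl (fun k hk => ?_)
              have := Finset.mem_range.mp hk
              congr 1
              omega
          _ ≤ (1-β)⁻¹ := geom_bd hβ0 hβ1 t
      have hvtB : |vt / (1-α)| ≤ Mv / (1-α) := by
        rw [abs_div, abs_of_pos h1α]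
        exact div_le_div_of_nonneg_right (hMvb _ hx₂) (le_of_lt h1α)
      have hnum : |Gu * Gv - ut * vt / (1-α)^2|
          ≤ (Mu * (1-β)⁻¹) * |Gv - vt/(1-α)| + (Mv/(1-α)) * |Gu - ut/(1-α)| := by
        have hidty : Gu * Gv - ut * vt / (1-α)^2
            = Gu * (Gv - vt/(1-α)) + (vt/(1-α)) * (Gu - ut/(1-α)) := by
          field_simp
          ring
        rw [hidty]
        refine le_trans (abs_add_le _ _) ?_
        rw [abs_mul, abs_mul]
        exact add_le_add (mul_le_mul_of_nonneg_right hGuB (abs_nonneg _))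
          (mul_le_mul_of_nonneg_right hvtB (abs_nonneg _))
      have hh₀t : h₀ (((t:ℝ)+1)/T) = (ut * vt / (1-α)^2) / wt := by
        rw [hh₀def]
        show 1/(1-α)^2 * (ut*vt/wt) = ut*vt/(1-α)^2/wt; ring
      rw [hh₀t, div_sub_div_same, abs_div, abs_of_pos hwtpos]
      calc |Gu * Gv - ut * vt / (1-α)^2| / wt
          ≤ |Gu * Gv - ut * vt / (1-α)^2| / a := by
            exact div_le_div_of_nonneg_left (abs_nonneg _) ha hwt
        _ ≤ ((Mu * (1-β)⁻¹) * |Gv - vt/(1-α)| + (Mv/(1-α)) * |Gu - ut/(1-α)|) / a := by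
            exact div_le_div_of_nonneg_right hnum (le_of_lt ha)
        _ = (Mu * (1-β)⁻¹ / a) * |Gv - vt/(1-α)| + (Mv / (1-α) / a) * |Gu - ut/(1-α)| := by
            ring
    calc (T:ℝ)⁻¹ * |∑ t ∈ Finset.range T,
          ((∑ s ∈ Finset.range t, α^(t-s-1) * u (((s:ℝ)+1)/T))
            * (∑ s ∈ Finset.range t, α^(t-s-1) * v (((s:ℝ)+1)/T)) / w (((t:ℝ)+1)/T)
            - h₀ (((t:ℝ)+1)/T))|
        ≤ (T:ℝ)⁻¹ * ∑ t ∈ Finset.range T,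
          ((Mu * (1-β)⁻¹ / a) *
            |(∑ s ∈ Finset.range t, α^(t - s - 1) * v (((s:ℝ)+1)/T)) - v (((t:ℝ)+1)/T) / (1-α)|
          + (Mv / (1-α) / a) *
            |(∑ s ∈ Finset.range t, α^(t - s - 1) * u (((s:ℝ)+1)/T)) - u (((t:ℝ)+1)/T) / (1-α)|) := by
          refine mul_le_mul_of_nonneg_left ?_ (inv_nonneg.mpr (le_of_lt hT0))
          exact le_trans (Finset.abs_sum_le_sum_abs _ _) (Finset.sum_le_sum hptwise)
      _ = (Mu * (1-β)⁻¹ / a) * ((T:ℝ)⁻¹ * ∑ t ∈ Finset.range T,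
            |(∑ s ∈ Finset.range t, α^(t - s - 1) * v (((s:ℝ)+1)/T)) - v (((t:ℝ)+1)/T) / (1-α)|)
          + (Mv / (1-α) / a) * ((T:ℝ)⁻¹ * ∑ t ∈ Finset.range T,
            |(∑ s ∈ Finset.range t, α^(t - s - 1) * u (((s:ℝ)+1)/T)) - u (((t:ℝ)+1)/T) / (1-α)|) := by
          rw [Finset.sum_add_distrib, ← Finset.mul_sum, ← Finset.mul_sum]
          ring
  have := hdiff.add hR
  simp only [zero_add] at this
  refine this.congr (fun T => ?_)
  ring


/-- Riemann-sum limit: with `f_t = ψ(t/T)`, `σ_t² = σ²(t/T)` for continuous `ψ`, `σ²`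
with `σ² ≥ a > 0`, `|α| < 1`, and `L` the matrix with entries `α^(t-s-1)` for `t > s`,
`(1/T) F' L' D⁻¹ L F → (1/(1-α)²) ∫₀¹ ψ(s)ψ(s)'/σ²(s) ds`. -/
theorem stmt_10 (r : ℕ) (α a : ℝ) (hα : |α| < 1) (ha : 0 < a)
    (ψ : ℝ → Fin r → ℝ) (σsq : ℝ → ℝ)
    (hψ : ContinuousOn ψ (Set.Icc 0 1)) (hσcont : ContinuousOn σsq (Set.Icc 0 1))
    (hσ : ∀ s ∈ Set.Icc (0:ℝ) 1, a ≤ σsq s)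
    (L : (T : ℕ) → Matrix (Fin T) (Fin T) ℝ)
    (hL : ∀ (T : ℕ) (t s : Fin T), L T t s =
      if (s : ℕ) < (t : ℕ) then α ^ ((t : ℕ) - (s : ℕ) - 1) else 0)
    (F : (T : ℕ) → Matrix (Fin T) (Fin r) ℝ)
    (hF : ∀ (T : ℕ) (t : Fin T) (j : Fin r), F T t j = ψ (((t : ℕ) + 1) / T) j)
    (D : (T : ℕ) → Matrix (Fin T) (Fin T) ℝ)
    (hD : ∀ T : ℕ, D T = Matrix.diagonal (fun t : Fin T => σsq (((t : ℕ) + 1) / T))) :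
    Tendsto (fun T : ℕ => (1 / (T : ℝ)) • ((F T)ᵀ * (L T)ᵀ * (D T)⁻¹ * (L T * F T)))
      atTop (nhds ((1 / (1 - α) ^ 2) •
        Matrix.of fun i j : Fin r => ∫ s in (0:ℝ)..1, ψ s i * ψ s j / σsq s)) := by
  have h1α : (0:ℝ) < 1 - α := by have := le_abs_self α; linarith
  have hψi : ∀ i : Fin r, ContinuousOn (fun s => ψ s i) (Set.Icc 0 1) :=
    fun i => (continuous_apply i).comp_continuousOn hψ
  refine tendsto_pi_nhds.mpr fun i => tendsto_pi_nhds.mpr fun j => ?_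
  have hmain := scalar_main hα ha (hψi i) (hψi j) hσcont hσ
  have hlim : ((1 / (1 - α) ^ 2) • Matrix.of fun i j : Fin r =>
      ∫ s in (0:ℝ)..1, ψ s i * ψ s j / σsq s) i j
      = (1/(1-α)^2) * ∫ s in (0:ℝ)..1, ψ s i * ψ s j / σsq s := rfl
  rw [hlim]
  refine Tendsto.congr' ?_ hmain
  filter_upwards [eventually_ge_atTop 1] with T hT1
  have hT0 : (0:ℝ) < T := by exact_mod_cast Nat.lt_of_lt_of_le Nat.zero_lt_one hT1
  -- inverse of D
  have hDinv : (D T)⁻¹ = Matrix.diagonal (fun t : Fin T => (σsq (((t:ℕ)+1)/(T:ℝ)))⁻¹) := by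
    rw [hD]
    refine Matrix.inv_eq_right_inv ?_
    rw [Matrix.diagonal_mul_diagonal]
    rw [show (fun t : Fin T => σsq (((t:ℕ)+1)/(T:ℝ)) * (σsq (((t:ℕ)+1)/(T:ℝ)))⁻¹)
        = fun _ : Fin T => (1:ℝ) from funext fun t => mul_inv_cancel₀ (ne_of_gt ?_)]
    · exact Matrix.diagonal_one
    · refine lt_of_lt_of_le ha (hσ _ ⟨by positivity, ?_⟩)
      rw [div_le_one hT0]
      have := t.isLt
      push_cast
      exact_mod_cast Nat.succ_le_of_lt this
  have hLF : ∀ (t : Fin T) (k : Fin r), (L T * F T) t k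
      = ∑ s ∈ Finset.range (t:ℕ), α^((t:ℕ)-s-1) * ψ (((s:ℝ)+1)/T) k := by
    intro t k
    rw [Matrix.mul_apply]
    rw [show (fun s : Fin T => L T t s * F T s k) = fun s : Fin T =>
        (fun n : ℕ => (if n < (t:ℕ) then α^((t:ℕ)-n-1) else 0) * ψ (((n:ℝ)+1)/T) k) (s:ℕ)
      from funext fun s => by rw [hL, hF]]
    rw [Fin.sum_univ_eq_sum_range
      (fun n : ℕ => (if n < (t:ℕ) then α^((t:ℕ)-n-1) else 0) * ψ (((n:ℝ)+1)/T) k) T]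
    rw [← Finset.sum_subset (Finset.range_subset_range.mpr (le_of_lt t.isLt))
      (fun x _ hx => by rw [if_neg (by simpa using hx), zero_mul])]
    refine Finset.sum_congr rfl (fun s hs => ?_)
    rw [if_pos (Finset.mem_range.mp hs)]
  have hsm : ((1 / (T:ℝ)) • ((F T)ᵀ * (L T)ᵀ * (D T)⁻¹ * (L T * F T))) i j
      = (1 / (T:ℝ)) * (((F T)ᵀ * (L T)ᵀ * (D T)⁻¹ * (L T * F T)) i j) := rfl
  rw [hsm]
  rw [show (F T)ᵀ * (L T)ᵀ * (D T)⁻¹ * (L T * F T)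
      = ((L T * F T)ᵀ * (D T)⁻¹) * (L T * F T) from by
    rw [Matrix.transpose_mul]]
  rw [hDinv, Matrix.mul_apply]
  simp only [Matrix.mul_diagonal, Matrix.transpose_apply, hLF]
  rw [Fin.sum_univ_eq_sum_range (fun t => (∑ s ∈ Finset.range t, α^(t-s-1) * ψ (((s:ℝ)+1)/T) i)
      * (σsq (((t:ℝ)+1)/T))⁻¹ * (∑ s ∈ Finset.range t, α^(t-s-1) * ψ (((s:ℝ)+1)/T) j))]
  rw [one_div]
  congr 1
  refine Finset.sum_congr rfl (fun t _ => ?_)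
  rw [div_eq_mul_inv]
  ring
end
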